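/- Let G and H be finite groups. If the direct product G^{ab} × G is isomorphic as a group to H^{ab} × H, where G^{ab} = G/G' denotes the abelianization, then G is isomorphic to H. -/

import Mathlib

open Function

universe u v w

section Aux

instance monoidHomFinite {G : Type*} {H : Type*} [MulOneClass G] [MulOneClass H]
    [Finite G] [Finite H] : Finite (G →* H) :=
  Finite.of_injective (fun f => (f : G → H)) DFunLike.coe_injective

/-- Homs into a product. -/
def homProdEquiv (L M N : Type*) [MulOneClass L] [MulOneClass M] [MulOneClass N] :
    (L →* M × N) ≃ (L →* M) × (L →* N) where
  toFun f := ⟨(MonoidHom.fst M N).comp f, (MonoidHom.snd M N).comp f⟩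
  invFun p := p.1.prod p.2
  left_inv f := by ext x <;> rfl
  right_inv p := by ext x <;> rfl

lemma card_hom_prod (L M N : Type*) [MulOneClass L] [MulOneClass M] [MulOneClass N] :
    Nat.card (L →* M × N) = Nat.card (L →* M) * Nat.card (L →* N) := by
  rw [Nat.card_congr (homProdEquiv L M N), Nat.card_prod]

/-- Abelianization of a product. -/
noncomputable def abelianizationProd (M N : Type*) [Group M] [Group N] :
    Abelianization (M × N) ≃* Abelianization M × Abelianization N :=
  MonoidHom.toMulEquiv
    (Abelianization.lift ((Abelianization.of.comp (MonoidHom.fst M N)).prod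
      (Abelianization.of.comp (MonoidHom.snd M N))))
    ((Abelianization.map (MonoidHom.inl M N)).coprod (Abelianization.map (MonoidHom.inr M N)))
    (by
      apply Abelianization.hom_ext
      ext ⟨m, n⟩
      simp [MonoidHom.coprod_apply, ← Abelianization.of.map_mul]
      )
    (by
      have h1 : ∀ a : Abelianization M,
          (Abelianization.lift ((Abelianization.of.comp (MonoidHom.fst M N)).prod
            (Abelianization.of.comp (MonoidHom.snd M N))))
            ((Abelianization.map (MonoidHom.inl M N)) a) = (a, 1) := fun a =>
        QuotientGroup.induction_on a fun m =>
          Prod.ext_iff.mpr ⟨rfl, map_one Abelianization.of⟩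
      have h2 : ∀ b : Abelianization N,
          (Abelianization.lift ((Abelianization.of.comp (MonoidHom.fst M N)).prod
            (Abelianization.of.comp (MonoidHom.snd M N))))
            ((Abelianization.map (MonoidHom.inr M N)) b) = (1, b) := fun b =>
        QuotientGroup.induction_on b fun n =>
          Prod.ext_iff.mpr ⟨map_one Abelianization.of, rfl⟩
      apply MonoidHom.ext
      rintro ⟨a, b⟩
      have hab : ((a, b) : Abelianization M × Abelianization N) = (a, 1) * (1, b) := by
        simp
      simp only [MonoidHom.comp_apply, MonoidHom.id_apply, MonoidHom.coprod_apply, map_mul,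
        h1, h2]
      exact hab.symm)

end Aux

section Count

variable {G : Type u} {H : Type v}

noncomputable instance fintypeNormalSubgroup (L : Type w) [Group L] [Finite L] :
    Fintype {N : Subgroup L // N.Normal} :=
  Fintype.ofFinite _

/-- Number of injective homs. -/
noncomputable def injCard (L : Type w) (G : Type u) [Group L] [Group G] : ℕ :=
  Nat.card {f : L →* G // Function.Injective f}

lemma injCard_congr {L L' : Type w} [Group L] [Group L'] (e : L ≃* L') (G : Type u) [Group G] :
    injCard L G = injCard L' G := by
  refine Nat.card_congr ⟨fun f => ⟨f.1.comp e.symm.toMonoidHom, f.2.comp e.symm.injective⟩,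
    fun f => ⟨f.1.comp e.toMonoidHom, f.2.comp e.injective⟩, ?_, ?_⟩ <;>
  · intro ⟨f, hf⟩
    apply Subtype.ext
    ext x
    simp

/-- The fiber of the kernel map. -/
noncomputable def kerFiberEquiv (L : Type w) (G : Type u) [Group L] [Group G]
    (N : Subgroup L) [hN : N.Normal] :
    {f : L →* G // f.ker = N} ≃ {g : L ⧸ N →* G // Function.Injective g} where
  toFun f := ⟨QuotientGroup.lift N f.1 (fun x hx => MonoidHom.mem_ker.mp (show x ∈ f.1.ker by rw [f.2]; exact hx)), by
    intro a b hab
    induction a using QuotientGroup.induction_on with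
    | H a =>
    induction b using QuotientGroup.induction_on with
    | H b =>
    rw [QuotientGroup.eq]
    have : f.1 (a⁻¹ * b) = 1 := by
      simp only [map_mul, map_inv]
      replace hab : f.1 a = f.1 b := hab
      rw [hab]
      simp
    rw [← f.2]
    exact MonoidHom.mem_ker.mpr this⟩
  invFun g := ⟨g.1.comp (QuotientGroup.mk' N), by
    ext x
    simp only [MonoidHom.mem_ker, MonoidHom.comp_apply, QuotientGroup.mk'_apply]
    rw [show (1 : G) = g.1 1 by simp, g.2.eq_iff, ← QuotientGroup.mk'_apply,
      ← MonoidHom.mem_ker, QuotientGroup.ker_mk']⟩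
  left_inv f := Subtype.ext (MonoidHom.ext fun x => rfl)
  right_inv g := Subtype.ext (MonoidHom.ext fun q => by
    induction q using QuotientGroup.induction_on with
    | H x => rfl)

lemma card_hom_eq_sum (L : Type w) (G : Type u) [Group L] [Group G] [Finite L] [Finite G] :
    Nat.card (L →* G) =
      ∑ N : {N : Subgroup L // N.Normal}, (letI := N.2; injCard (L ⧸ N.1) G) := by
  classical
  haveI : Fintype (L →* G) := Fintype.ofFinite _
  rw [Nat.card_eq_fintype_card, ← Finset.card_univ]
  rw [Finset.card_eq_sum_card_fiberwise
    (f := fun f : L →* G => (⟨f.ker, f.normal_ker⟩ : {N : Subgroup L // N.Normal}))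
    (t := Finset.univ) (fun _ _ => Finset.mem_univ _)]
  apply Finset.sum_congr rfl
  intro N _
  letI := N.2
  rw [injCard, ← Nat.card_congr (kerFiberEquiv L G N.1), Nat.card_eq_fintype_card]
  rw [← Fintype.card_subtype]
  apply Fintype.card_congr
  apply Equiv.subtypeEquivRight
  intro f
  constructor
  · intro h
    have := congrArg Subtype.val h
    simpa using this
  · intro h
    exact Subtype.ext (by simpa using h)

lemma injCard_eq [Group G] [Group H] [Finite G] [Finite H]
    (hyp : ∀ (L : Type w) [Group L] [Finite L], Nat.card (L →* G) = Nat.card (L →* H)) :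
    ∀ (L : Type w) [Group L] [Finite L], injCard L G = injCard L H := by
  suffices h : ∀ (n : ℕ) (L : Type w) [Group L] [Finite L], Nat.card L = n →
      injCard L G = injCard L H by
    intro L _ _
    exact h (Nat.card L) L rfl
  intro n
  induction n using Nat.strong_induction_on with
  | _ n ih =>
  intro L _ _ hL
  classical
  have hsumG := card_hom_eq_sum L G
  have hsumH := card_hom_eq_sum L H
  have hbot : (⟨⊥, inferInstance⟩ : {N : Subgroup L // N.Normal}) ∈ Finset.univ :=
    Finset.mem_univ _
  rw [← Finset.add_sum_erase _ _ hbot] at hsumG hsumH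
  have hrest : ∀ N ∈ Finset.univ.erase (⟨⊥, inferInstance⟩ : {N : Subgroup L // N.Normal}),
      (letI := N.2; injCard (L ⧸ N.1) G) = (letI := N.2; injCard (L ⧸ N.1) H) := by
    intro N hN
    letI := N.2
    have hne : N.1 ≠ ⊥ := by
      intro h
      apply Finset.ne_of_mem_erase hN
      exact Subtype.ext h
    have hlt : Nat.card (L ⧸ N.1) < n := by
      rw [← hL]
      have h1 : Nat.card L = Nat.card (L ⧸ N.1) * Nat.card N.1 :=
        Subgroup.card_eq_card_quotient_mul_card_subgroup N.1
      have h2 : 1 < Nat.card N.1 := (Subgroup.one_lt_card_iff_ne_bot N.1).mpr hne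
      have h3 : 0 < Nat.card (L ⧸ N.1) := Nat.card_pos
      calc Nat.card (L ⧸ N.1) = Nat.card (L ⧸ N.1) * 1 := (mul_one _).symm
        _ < Nat.card (L ⧸ N.1) * Nat.card N.1 := by
            exact mul_lt_mul_of_pos_left h2 h3
        _ = Nat.card L := h1.symm
    exact ih _ hlt (L ⧸ N.1) rfl
  rw [Finset.sum_congr rfl hrest] at hsumG
  have := hyp L
  rw [hsumG, hsumH] at this
  have := Nat.add_right_cancel this
  simpa [injCard_congr (QuotientGroup.quotientBot (G := L)).symm] using this

/-- Finite groups with the same hom counts are isomorphic. -/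
lemma iso_of_card_hom_eq {G : Type u} {H : Type v} [Group G] [Group H] [Finite G] [Finite H]
    (hcard : Nat.card G = Nat.card H)
    (hyp : ∀ (L : Type u) [Group L] [Finite L], Nat.card (L →* G) = Nat.card (L →* H)) :
    Nonempty (G ≃* H) := by
  have h := injCard_eq (G := G) (H := H) hyp G
  have hG : 0 < injCard G G := by
    rw [injCard]
    exact Nat.card_pos_iff.mpr ⟨⟨⟨MonoidHom.id G, fun a b h => h⟩⟩, inferInstance⟩
  rw [h] at hG
  rw [injCard] at hG
  obtain ⟨⟨f, hf⟩⟩ := Nat.card_pos_iff.mp hG |>.1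
  have hbij : Function.Bijective f := by
    rw [Nat.bijective_iff_injective_and_card]
    exact ⟨hf, hcard⟩
  exact ⟨MulEquiv.ofBijective f hbij⟩

end Count

/-- Let `G` and `H` be finite groups.  If
`G^{ab} × G ≅ H^{ab} × H` as groups, where `G^{ab} = G/G'` is the abelianization,
then `G ≅ H`. -/
theorem iso_of_abelianization_prod_iso {G H : Type*} [Group G] [Group H]
    [Finite G] [Finite H]
    (e : (Abelianization G × G) ≃* (Abelianization H × H)) :
    Nonempty (G ≃* H) := by
  set A := Abelianization G with hA
  set B := Abelianization H with hB
  -- the induced iso A × A ≃* B × B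
  have c1 : (A × A) ≃* (B × B) := by
    refine MulEquiv.trans (MulEquiv.prodCongr Abelianization.equivOfComm (MulEquiv.refl A)) ?_
    refine MulEquiv.trans (abelianizationProd A G).symm ?_
    refine MulEquiv.trans e.abelianizationCongr ?_
    refine MulEquiv.trans (abelianizationProd B H) ?_
    exact MulEquiv.prodCongr Abelianization.equivOfComm.symm (MulEquiv.refl B)
  -- hom counts into A equal hom counts into B
  have hAB : ∀ (L : Type _) [Group L] [Finite L], Nat.card (L →* A) = Nat.card (L →* B) := by
    intro L _ _
    have h1 : Nat.card (L →* A × A) = Nat.card (L →* B × B) :=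
      Nat.card_congr ⟨fun f => c1.toMonoidHom.comp f, fun f => c1.symm.toMonoidHom.comp f,
        fun f => MonoidHom.ext fun x => by simp, fun f => MonoidHom.ext fun x => by simp⟩
    rw [card_hom_prod, card_hom_prod] at h1
    exact Nat.mul_self_inj.mp h1
  have hApos : ∀ (L : Type _) [Group L] [Finite L], 0 < Nat.card (L →* A) := by
    intro L _ _
    exact Nat.card_pos_iff.mpr ⟨⟨1⟩, inferInstance⟩
  -- hom counts into G equal hom counts into H
  have hyp : ∀ (L : Type _) [Group L] [Finite L], Nat.card (L →* G) = Nat.card (L →* H) := by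
    intro L _ _
    have h1 : Nat.card (L →* A × G) = Nat.card (L →* B × H) :=
      Nat.card_congr ⟨fun f => e.toMonoidHom.comp f, fun f => e.symm.toMonoidHom.comp f,
        fun f => MonoidHom.ext fun x => by simp, fun f => MonoidHom.ext fun x => by simp⟩
    rw [card_hom_prod, card_hom_prod, hAB L] at h1
    exact Nat.eq_of_mul_eq_mul_left (hAB L ▸ hApos L) h1
  -- cardinalities agree
  have hcardA : Nat.card A = Nat.card B := by
    have := Nat.card_congr c1.toEquiv
    rw [Nat.card_prod, Nat.card_prod] at this
    exact Nat.mul_self_inj.mp this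
  have hcard : Nat.card G = Nat.card H := by
    have := Nat.card_congr e.toEquiv
    rw [Nat.card_prod, Nat.card_prod, hcardA] at this
    exact Nat.eq_of_mul_eq_mul_left (hcardA ▸ Nat.card_pos) this
  exact iso_of_card_hom_eq hcard hyp
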